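/- arXiv:1107.4782 — 2 statements merged into one kernel-verified Lean document; each statement's English description precedes it below -/
import Mathlib

section
/- Kernel difference estimate: Let K(x,y) = (1/|y−x|)[id + ω⊗ω] with ω = (y−x)/|y−x|, a 3×3 matrix-valued kernel defined for x ≠ y in ℝ³. Then there exists a universal constant C > 0 such that for all distinct x, z ∈ ℝ³ and every y ∈ ℝ³ with y ≠ x and y ≠ z, there exist points u₁, u₂, u₃ on the closed line segment joining x and z, each different from y, such that for all i,j ∈ {1,2,3}: |K_{ij}(x,y) − K_{ij}(z,y)| ≤ C |x−z| ( 1/|y−u₁|² + 1/|y−u₂|² + 1/|y−u₃|² ). -/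
lemma coord_abs_le_norm (v : EuclideanSpace ℝ (Fin 3)) (i : Fin 3) : |v i| ≤ ‖v‖ := by
  rw [EuclideanSpace.norm_eq]
  have h1 : |v i| = Real.sqrt (‖v i‖ ^ 2) := by rw [Real.sqrt_sq_eq_abs]; simp
  rw [h1]
  exact Real.sqrt_le_sqrt <|
    Finset.single_le_sum (f := fun j => ‖v j‖ ^ 2) (fun j _ => by positivity) (Finset.mem_univ i)

lemma bnd_real (e r a b : ℝ) (he : |e| ≤ 1) (hr : 0 < r) (ha : |a| ≤ r) (hb : |b| ≤ r) :
    |(e + (a / r) * (b / r)) / r| ≤ 2 / r := by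
  rw [abs_div, abs_of_pos hr, div_le_div_iff₀ hr hr]
  have h := abs_add_le e ((a / r) * (b / r))
  have h2 : |(a / r) * (b / r)| ≤ 1 := by
    rw [abs_mul, abs_div, abs_div, abs_of_pos hr, div_mul_div_comm, div_le_one (by positivity)]
    nlinarith [abs_nonneg a, abs_nonneg b]
  nlinarith

set_option maxHeartbeats 1600000 in
lemma aux_real (e r s d ai aj bi bj : ℝ) (he : |e| ≤ 1) (hr : 0 < r) (hs : 0 < s) (hd : 0 < d)
    (hai : |ai| ≤ r) (haj : |aj| ≤ r) (hbi : |bi| ≤ s) (hbj : |bj| ≤ s)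
    (hdi : |ai - bi| ≤ d) (hdj : |aj - bj| ≤ d) (hrs : |r - s| ≤ d) :
    |(e + (ai / r) * (aj / r)) / r - (e + (bi / s) * (bj / s)) / s|
      ≤ 100 * d * (1 / r ^ 2 + 1 / s ^ 2 + 1 / r ^ 2) := by
  have hrs1 : r - s ≤ d := (abs_le.mp hrs).2
  have hrs2 : s - r ≤ d := by have := (abs_le.mp hrs).1; linarith
  by_cases hcase : r ≤ 2 * d ∨ s ≤ 2 * d
  · -- crude bound: LHS ≤ 2/r + 2/s
    have hb1 := bnd_real e r ai aj he hr hai haj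
    have hb2 := bnd_real e s bi bj he hs hbi hbj
    have htri : |(e + (ai / r) * (aj / r)) / r - (e + (bi / s) * (bj / s)) / s|
        ≤ 2 / r + 2 / s := (abs_sub _ _).trans (by linarith)
    refine htri.trans ?_
    rcases hcase with hc | hc
    · have h1 : 2 / r ≤ 4 * d / r ^ 2 := by
        rw [div_le_div_iff₀ hr (by positivity)]; nlinarith
      have hs3 : s ≤ 3 * d := by linarith
      have h2 : 2 / s ≤ 6 * d / s ^ 2 := by
        rw [div_le_div_iff₀ hs (by positivity)]; nlinarith
      have h3 : (0:ℝ) ≤ d / r ^ 2 := by positivity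
      have h4 : (0:ℝ) ≤ d / s ^ 2 := by positivity
      calc 2 / r + 2 / s ≤ 4 * d / r ^ 2 + 6 * d / s ^ 2 := by linarith
        _ ≤ 100 * d * (1 / r ^ 2 + 1 / s ^ 2 + 1 / r ^ 2) := by
            rw [mul_add, mul_add]
            have : 4 * d / r ^ 2 ≤ 100 * d * (1 / r ^ 2) := by
              rw [mul_one_div]; apply div_le_div_of_nonneg_right ?_ (by positivity) |>.trans le_rfl
              linarith
            have : 6 * d / s ^ 2 ≤ 100 * d * (1 / s ^ 2) := by
              rw [mul_one_div]; apply div_le_div_of_nonneg_right ?_ (by positivity) |>.trans le_rfl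
              linarith
            have h5 : (0:ℝ) ≤ 100 * d * (1 / r ^ 2) := by positivity
            have h6 : 4 * d / r ^ 2 ≤ 100 * d * (1 / r ^ 2) := by
              rw [mul_one_div]
              exact div_le_div_of_nonneg_right (by linarith) (by positivity) |>.trans le_rfl
            linarith
    · have h1 : 2 / s ≤ 4 * d / s ^ 2 := by
        rw [div_le_div_iff₀ hs (by positivity)]; nlinarith
      have hr3 : r ≤ 3 * d := by linarith
      have h2 : 2 / r ≤ 6 * d / r ^ 2 := by
        rw [div_le_div_iff₀ hr (by positivity)]; nlinarith
      have h5 : (0:ℝ) ≤ 100 * d * (1 / r ^ 2) := by positivity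
      have h6 : 6 * d / r ^ 2 ≤ 100 * d * (1 / r ^ 2) := by
        rw [mul_one_div]
        exact div_le_div_of_nonneg_right (by linarith) (by positivity)
      have h7 : 4 * d / s ^ 2 ≤ 100 * d * (1 / s ^ 2) := by
        rw [mul_one_div]
        exact div_le_div_of_nonneg_right (by linarith) (by positivity)
      rw [mul_add, mul_add]
      linarith
  · push_neg at hcase
    obtain ⟨hc1, hc2⟩ := hcase
    -- now 2d < r and 2d < s, so r/2 < s < 2r etc.
    have hs_lb : r / 2 < s := by linarith
    have hs_ub : s < 2 * r := by linarith
    have hE : (e + (ai / r) * (aj / r)) / r - (e + (bi / s) * (bj / s)) / s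
        = e * (1 / r - 1 / s) + (ai * aj - bi * bj) / r ^ 3
          + bi * bj * (1 / r ^ 3 - 1 / s ^ 3) := by
      field_simp; ring
    rw [hE]
    clear hE
    have T1 : |e * (1 / r - 1 / s)| ≤ 2 * d / r ^ 2 := by
      rw [abs_mul]
      have heq : (1 / r - 1 / s) = (s - r) / (r * s) := by field_simp
      have h1 : |1 / r - 1 / s| ≤ d / (r * s) := by
        rw [heq, abs_div, abs_of_pos (by positivity : (0:ℝ) < r * s)]
        gcongr
        rw [abs_sub_comm]; exact hrs
      have h3 : d / (r * s) ≤ 2 * d / r ^ 2 := by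
        rw [div_le_div_iff₀ (by positivity) (by positivity)]
        nlinarith [mul_nonneg (mul_nonneg hd.le hr.le) (by linarith : (0:ℝ) ≤ 2 * s - r)]
      calc |e| * |1 / r - 1 / s| ≤ 1 * (d / (r * s)) :=
            mul_le_mul he h1 (abs_nonneg _) zero_le_one
        _ = d / (r * s) := one_mul _
        _ ≤ 2 * d / r ^ 2 := h3
    have T2 : |(ai * aj - bi * bj) / r ^ 3| ≤ 3 * d / r ^ 2 := by
      rw [abs_div, abs_of_pos (by positivity : (0:ℝ) < r ^ 3)]
      have h2 : |ai| * |aj - bj| ≤ r * d := mul_le_mul hai hdj (abs_nonneg _) hr.le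
      have h3 : |ai - bi| * |bj| ≤ d * s := mul_le_mul hdi hbj (abs_nonneg _) hd.le
      have h4 : d * s ≤ d * (2 * r) := mul_le_mul_of_nonneg_left (by linarith) hd.le
      have h1 : |ai * aj - bi * bj| ≤ 3 * r * d := by
        have hsplit : ai * aj - bi * bj = ai * (aj - bj) + (ai - bi) * bj := by ring
        calc |ai * aj - bi * bj| = |ai * (aj - bj) + (ai - bi) * bj| := by rw [hsplit]
          _ ≤ |ai * (aj - bj)| + |(ai - bi) * bj| := abs_add_le _ _
          _ = |ai| * |aj - bj| + |ai - bi| * |bj| := by rw [abs_mul, abs_mul]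
          _ ≤ 3 * r * d := by linarith
      rw [div_le_div_iff₀ (by positivity) (by positivity)]
      calc |ai * aj - bi * bj| * r ^ 2 ≤ 3 * r * d * r ^ 2 :=
            mul_le_mul_of_nonneg_right h1 (by positivity)
        _ = 3 * d * r ^ 3 := by ring
    have T3 : |bi * bj * (1 / r ^ 3 - 1 / s ^ 3)| ≤ 10 * d / r ^ 2 := by
      rw [abs_mul]
      have heq : (1 / r ^ 3 - 1 / s ^ 3) = (s - r) * (s ^ 2 + s * r + r ^ 2) / (r ^ 3 * s ^ 3) := by
        field_simp; ring
      have h1 : |1 / r ^ 3 - 1 / s ^ 3| ≤ d * (5 * (r * s)) / (r ^ 3 * s ^ 3) := by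
        rw [heq, abs_div, abs_of_pos (by positivity : (0:ℝ) < r ^ 3 * s ^ 3)]
        gcongr
        rw [abs_mul, abs_of_pos (by positivity : (0:ℝ) < s ^ 2 + s * r + r ^ 2)]
        have habs : |s - r| ≤ d := by rw [abs_sub_comm]; exact hrs
        have h0 : (0:ℝ) ≤ s ^ 2 + s * r + r ^ 2 := by positivity
        calc |s - r| * (s ^ 2 + s * r + r ^ 2) ≤ d * (s ^ 2 + s * r + r ^ 2) :=
              mul_le_mul_of_nonneg_right habs h0
          _ ≤ d * (5 * (r * s)) := by
              have p1 : s * s ≤ 2 * r * s := mul_le_mul_of_nonneg_right (by linarith) hs.le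
              have p2 : r * r ≤ 2 * s * r := mul_le_mul_of_nonneg_right (by linarith) hr.le
              apply mul_le_mul_of_nonneg_left ?_ hd.le
              nlinarith [p1, p2]
      have hbb : |bi * bj| ≤ s ^ 2 := by
        rw [abs_mul]
        calc |bi| * |bj| ≤ s * s := mul_le_mul hbi hbj (abs_nonneg _) hs.le
          _ = s ^ 2 := by ring
      have hkey : s ^ 2 * (d * (5 * (r * s)) / (r ^ 3 * s ^ 3)) = 5 * d / r ^ 2 := by
        field_simp
      calc |bi * bj| * |1 / r ^ 3 - 1 / s ^ 3|
          ≤ s ^ 2 * (d * (5 * (r * s)) / (r ^ 3 * s ^ 3)) :=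
            mul_le_mul hbb h1 (abs_nonneg _) (by positivity)
        _ = 5 * d / r ^ 2 := hkey
        _ ≤ 10 * d / r ^ 2 := by
            apply div_le_div_of_nonneg_right (by linarith) (by positivity)
    calc |e * (1 / r - 1 / s) + (ai * aj - bi * bj) / r ^ 3
            + bi * bj * (1 / r ^ 3 - 1 / s ^ 3)|
        ≤ |e * (1 / r - 1 / s) + (ai * aj - bi * bj) / r ^ 3|
          + |bi * bj * (1 / r ^ 3 - 1 / s ^ 3)| := abs_add_le _ _
      _ ≤ |e * (1 / r - 1 / s)| + |(ai * aj - bi * bj) / r ^ 3|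
          + |bi * bj * (1 / r ^ 3 - 1 / s ^ 3)| := by linarith [abs_add_le (e * (1 / r - 1 / s)) ((ai * aj - bi * bj) / r ^ 3)]
      _ ≤ 15 * d / r ^ 2 := by
          have key : 2 * d / r ^ 2 + 3 * d / r ^ 2 + 10 * d / r ^ 2 = 15 * d / r ^ 2 := by ring
          linarith
      _ ≤ 100 * d * (1 / r ^ 2 + 1 / s ^ 2 + 1 / r ^ 2) := by
          have h1 : (0:ℝ) ≤ d / s ^ 2 := by positivity
          have h2 : 15 * d / r ^ 2 ≤ 100 * d * (1 / r ^ 2) := by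
            rw [mul_one_div]
            exact div_le_div_of_nonneg_right (by linarith) (by positivity)
          have h3 : (0:ℝ) ≤ 100 * d * (1 / s ^ 2) := by positivity
          have h4 : (0:ℝ) ≤ 100 * d * (1 / r ^ 2) := by positivity
          rw [mul_add, mul_add]
          linarith


/-- The `(i,j)` entry of the Darwin kernel `K(x,y) = (1/|y−x|)[id + ω⊗ω]`,
where `ω = (y−x)/|y−x|`. -/
noncomputable def darwinK (i j : Fin 3) (x y : EuclideanSpace ℝ (Fin 3)) : ℝ :=
  ((if i = j then (1 : ℝ) else 0)
    + ((y - x) i / ‖y - x‖) * ((y - x) j / ‖y - x‖)) / ‖y - x‖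

/-- Kernel difference estimate: there is a universal constant `C > 0` such that for all
distinct `x, z` and all `y` different from both, there are points `u₁, u₂, u₃` on the closed
segment joining `x` and `z`, each different from `y`, with
`|K_{ij}(x,y) − K_{ij}(z,y)| ≤ C |x−z| (1/|y−u₁|² + 1/|y−u₂|² + 1/|y−u₃|²)` for all `i,j`. -/
theorem darwin_kernel_difference_estimate :
    ∃ C > 0, ∀ x z y : EuclideanSpace ℝ (Fin 3), x ≠ z → y ≠ x → y ≠ z →
      ∃ u₁ ∈ segment ℝ x z, ∃ u₂ ∈ segment ℝ x z, ∃ u₃ ∈ segment ℝ x z,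
        u₁ ≠ y ∧ u₂ ≠ y ∧ u₃ ≠ y ∧
        ∀ i j : Fin 3,
          |darwinK i j x y - darwinK i j z y|
            ≤ C * ‖x - z‖ * (1 / ‖y - u₁‖ ^ 2 + 1 / ‖y - u₂‖ ^ 2 + 1 / ‖y - u₃‖ ^ 2) := by
  refine ⟨100, by norm_num, fun x z y hxz hyx hyz => ?_⟩
  refine ⟨x, left_mem_segment ℝ x z, z, right_mem_segment ℝ x z, x, left_mem_segment ℝ x z,
    hyx.symm, hyz.symm, hyx.symm, fun i j => ?_⟩
  have hr : (0:ℝ) < ‖y - x‖ := by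
    rw [norm_pos_iff]; exact sub_ne_zero_of_ne hyx
  have hs : (0:ℝ) < ‖y - z‖ := by
    rw [norm_pos_iff]; exact sub_ne_zero_of_ne hyz
  have hd : (0:ℝ) < ‖x - z‖ := by
    rw [norm_pos_iff]; exact sub_ne_zero_of_ne hxz
  have hsub : (y - x) - (y - z) = z - x := by abel
  have hcomp : ∀ k : Fin 3, |(y - x) k - (y - z) k| ≤ ‖x - z‖ := by
    intro k
    have h1 : (y - x) k - (y - z) k = ((y - x) - (y - z)) k := rfl
    rw [h1, hsub]
    calc |(z - x) k| ≤ ‖z - x‖ := coord_abs_le_norm _ _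
      _ = ‖x - z‖ := norm_sub_rev _ _
  have hrs : |‖y - x‖ - ‖y - z‖| ≤ ‖x - z‖ := by
    calc |‖y - x‖ - ‖y - z‖| ≤ ‖(y - x) - (y - z)‖ := abs_norm_sub_norm_le _ _
      _ = ‖z - x‖ := by rw [hsub]
      _ = ‖x - z‖ := norm_sub_rev _ _
  have he : |if i = j then (1:ℝ) else 0| ≤ 1 := by split <;> norm_num
  exact aux_real _ _ _ _ _ _ _ _ he hr hs hd (coord_abs_le_norm _ _) (coord_abs_le_norm _ _)
    (coord_abs_le_norm _ _) (coord_abs_le_norm _ _) (hcomp i) (hcomp j) hrs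
end

section
/- Difference estimate for the normalized direction field: Let x, z ∈ ℝ³ be distinct, and let y ∈ ℝ³ not lie on the closed line segment joining x and z. Then there exists a point u on that closed segment such that | (y−x)/|y−x|² − (y−z)/|y−z|² | ≤ 3 |x−z| / |y−u|². -/
lemma inversion_dist_aux (a b : EuclideanSpace ℝ (Fin 3)) (ha : a ≠ 0) (hb : b ≠ 0) :
    ‖(‖a‖ ^ 2)⁻¹ • a - (‖b‖ ^ 2)⁻¹ • b‖ = ‖a - b‖ / (‖a‖ * ‖b‖) := by
  have ha' : (0:ℝ) < ‖a‖ := norm_pos_iff.mpr ha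
  have hb' : (0:ℝ) < ‖b‖ := norm_pos_iff.mpr hb
  have h1 : ‖(‖a‖ ^ 2)⁻¹ • a - (‖b‖ ^ 2)⁻¹ • b‖ ^ 2 = (‖a - b‖ / (‖a‖ * ‖b‖)) ^ 2 := by
    rw [norm_sub_sq_real, div_pow, norm_sub_sq_real, real_inner_smul_left, real_inner_smul_right,
      norm_smul, norm_smul]
    simp only [Real.norm_eq_abs, abs_inv, abs_pow, abs_norm]
    field_simp
    ring
  have h2 : (0:ℝ) ≤ ‖a - b‖ / (‖a‖ * ‖b‖) := by positivity
  nlinarith [norm_nonneg ((‖a‖ ^ 2)⁻¹ • a - (‖b‖ ^ 2)⁻¹ • b), h2]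

/-- Difference estimate for the normalized direction field: if `x ≠ z` and `y` does not lie
on the closed segment joining `x` and `z`, then there is a point `u` on that segment with
`| (y−x)/|y−x|² − (y−z)/|y−z|² | ≤ 3 |x−z| / |y−u|²`. -/
theorem direction_field_difference_estimate
    (x z y : EuclideanSpace ℝ (Fin 3)) (hxz : x ≠ z) (hy : y ∉ segment ℝ x z) :
    ∃ u ∈ segment ℝ x z,
      ‖(‖y - x‖ ^ 2)⁻¹ • (y - x) - (‖y - z‖ ^ 2)⁻¹ • (y - z)‖
        ≤ 3 * ‖x - z‖ / ‖y - u‖ ^ 2 := by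
  have hyx : y - x ≠ 0 := sub_ne_zero.mpr fun h => hy (h ▸ left_mem_segment ℝ x z)
  have hyz : y - z ≠ 0 := sub_ne_zero.mpr fun h => hy (h ▸ right_mem_segment ℝ x z)
  have ha : (0:ℝ) < ‖y - x‖ := norm_pos_iff.mpr hyx
  have hb : (0:ℝ) < ‖y - z‖ := norm_pos_iff.mpr hyz
  have key := inversion_dist_aux (y - x) (y - z) hyx hyz
  have hab : y - x - (y - z) = z - x := by abel
  rw [hab] at key
  have hd : ‖z - x‖ = ‖x - z‖ := norm_sub_rev z x
  have hdn : (0:ℝ) ≤ ‖x - z‖ := norm_nonneg _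
  rcases le_total ‖y - x‖ ‖y - z‖ with h | h
  · refine ⟨x, left_mem_segment ℝ x z, ?_⟩
    rw [key, hd, div_le_div_iff₀ (by positivity) (by positivity)]
    nlinarith [mul_le_mul_of_nonneg_left h (mul_nonneg hdn ha.le),
      mul_nonneg (mul_nonneg hdn ha.le) hb.le]
  · refine ⟨z, right_mem_segment ℝ x z, ?_⟩
    rw [key, hd, div_le_div_iff₀ (by positivity) (by positivity)]
    nlinarith [mul_le_mul_of_nonneg_left h (mul_nonneg hdn hb.le),
      mul_nonneg (mul_nonneg hdn ha.le) hb.le]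
end
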